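/- Let A ∈ SL(2,ℝ), let v, w ∈ ℝ² be nonzero vectors, let ε = ±1, and suppose A v = ε w. Let R_v be the matrix with columns v and Tv/‖v‖², and R_w the matrix with columns w and Tw/‖w‖², where T(x,y) = (−y,x). Then R_w^{-1} A R_v is upper triangular with both diagonal entries equal to ε, i.e., R_w^{-1} A R_v = [[ε, ν],[0, ε]] for some real ν. -/

import Mathlib

theorem stmt6 (A : Matrix (Fin 2) (Fin 2) ℝ) (hA : A.det = 1)
    (v1 v2 w1 w2 ε : ℝ)
    (hv : (v1, v2) ≠ ((0 : ℝ), (0 : ℝ))) (hw : (w1, w2) ≠ ((0 : ℝ), (0 : ℝ)))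
    (hε : ε = 1 ∨ ε = -1)
    (hAv : A.mulVec ![v1, v2] = ε • ![w1, w2]) :
    ∃ ν : ℝ,
      (!![w1, -w2 / (w1 ^ 2 + w2 ^ 2); w2, w1 / (w1 ^ 2 + w2 ^ 2)] :
        Matrix (Fin 2) (Fin 2) ℝ)⁻¹ * A *
        !![v1, -v2 / (v1 ^ 2 + v2 ^ 2); v2, v1 / (v1 ^ 2 + v2 ^ 2)] =
        !![ε, ν; 0, ε] := by
  have hε2 : ε * ε = 1 := by rcases hε with h | h <;> rw [h] <;> norm_num
  have hn : v1 ^ 2 + v2 ^ 2 ≠ 0 := by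
    intro h
    exact hv (by
      have h1 : v1 = 0 := by nlinarith [sq_nonneg v1, sq_nonneg v2]
      have h2 : v2 = 0 := by nlinarith [sq_nonneg v1, sq_nonneg v2]
      simp [h1, h2])
  have hm : w1 ^ 2 + w2 ^ 2 ≠ 0 := by
    intro h
    exact hw (by
      have h1 : w1 = 0 := by nlinarith [sq_nonneg w1, sq_nonneg w2]
      have h2 : w2 = 0 := by nlinarith [sq_nonneg w1, sq_nonneg w2]
      simp [h1, h2])
  have e0 : A 0 0 * v1 + A 0 1 * v2 = ε * w1 := by
    have := congrFun hAv 0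
    simpa [Matrix.mulVec, dotProduct, Fin.sum_univ_two] using this
  have e1 : A 1 0 * v1 + A 1 1 * v2 = ε * w2 := by
    have := congrFun hAv 1
    simpa [Matrix.mulVec, dotProduct, Fin.sum_univ_two] using this
  have hdet : A 0 0 * A 1 1 - A 0 1 * A 1 0 = 1 := by
    rw [Matrix.det_fin_two] at hA; exact hA
  have hRw : (!![w1, -w2 / (w1 ^ 2 + w2 ^ 2); w2, w1 / (w1 ^ 2 + w2 ^ 2)] :
      Matrix (Fin 2) (Fin 2) ℝ)⁻¹ =
      !![w1 / (w1 ^ 2 + w2 ^ 2), w2 / (w1 ^ 2 + w2 ^ 2); -w2, w1] := by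
    apply Matrix.inv_eq_right_inv
    ext i j
    fin_cases i <;> fin_cases j <;>
      simp [Matrix.mul_apply, Fin.sum_univ_two] <;> field_simp <;> ring
  rw [hRw]
  refine ⟨(w1 * (-A 0 0 * v2 + A 0 1 * v1) + w2 * (-A 1 0 * v2 + A 1 1 * v1)) /
    ((w1 ^ 2 + w2 ^ 2) * (v1 ^ 2 + v2 ^ 2)), ?_⟩
  ext i j
  fin_cases i <;> fin_cases j <;>
    simp only [Matrix.mul_apply, Fin.sum_univ_two, Matrix.cons_val', Matrix.cons_val_zero,
      Matrix.cons_val_one, Matrix.head_cons, Matrix.empty_val', Matrix.cons_val_fin_one,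
      Matrix.head_fin_const, Fin.zero_eta, Fin.mk_one, Matrix.of_apply] <;> field_simp
  · linear_combination (w1 * (w1^2 + w2^2)⁻¹ * 0 + w1) * e0 + w2 * e1
  · ring
  · linear_combination -w2 * e0 + w1 * e1
  · linear_combination (-ε * (A 0 0 * v2 - A 0 1 * v1)) * e1 +
      (-ε * (A 1 1 * v1 - A 1 0 * v2)) * e0 +
      (-(w2 * (A 0 0 * v2 - A 0 1 * v1) +
        w1 * (A 1 1 * v1 - A 1 0 * v2))) * hε2 +
      (ε * (v1 ^ 2 + v2 ^ 2)) * hdet
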